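/- Let α = (α_1, …, α_d) be rational numbers in (0,1), Galois-stable with m the lcm of their denominators, let p be an odd prime not dividing m, and let τ ∈ {1, −1}. If F_1(α,1^d|τ) is a p-adic unit (i.e., not divisible by p), then F_s(α,1^d|τ) is a p-adic unit for every s ≥ 1. -/

import Mathlib

open Finset

variable {p : ℕ} [hp : Fact p.Prime]

lemma pnorm_sum_le {ι : Type*} (s : Finset ι) (f : ι → ℚ_[p]) {ε : ℝ} (hε : 0 ≤ ε)
    (h : ∀ i ∈ s, ‖f i‖ ≤ ε) : ‖∑ i ∈ s, f i‖ ≤ ε := by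
  classical
  induction s using Finset.cons_induction with
  | empty => simpa using hε
  | cons a s ha ih =>
    rw [Finset.sum_cons]
    refine le_trans (Padic.nonarchimedean _ _) (max_le ?_ ?_)
    · exact h a (Finset.mem_cons_self _ _)
    · exact ih fun i hi => h i (Finset.mem_cons_of_mem hi)

lemma pnorm_prod_le_one {ι : Type*} (s : Finset ι) (f : ι → ℚ_[p])
    (h : ∀ i ∈ s, ‖f i‖ ≤ 1) : ‖∏ i ∈ s, f i‖ ≤ 1 := by
  rw [norm_prod]
  exact Finset.prod_le_one (fun i _ => norm_nonneg _) h

lemma pnorm_prod_sub_prod_le {ι : Type*} (s : Finset ι) (f g : ι → ℚ_[p]) {ε : ℝ}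
    (hε : 0 ≤ ε)
    (hf : ∀ i ∈ s, ‖f i‖ ≤ 1) (hg : ∀ i ∈ s, ‖g i‖ ≤ 1)
    (h : ∀ i ∈ s, ‖f i - g i‖ ≤ ε) :
    ‖∏ i ∈ s, f i - ∏ i ∈ s, g i‖ ≤ ε := by
  classical
  induction s using Finset.cons_induction with
  | empty => simpa using hε
  | cons a s ha ih =>
    rw [Finset.prod_cons, Finset.prod_cons]
    have key : f a * ∏ i ∈ s, f i - g a * ∏ i ∈ s, g i
        = f a * (∏ i ∈ s, f i - ∏ i ∈ s, g i) + (f a - g a) * ∏ i ∈ s, g i := by ring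
    rw [key]
    refine le_trans (Padic.nonarchimedean _ _) (max_le ?_ ?_)
    · rw [norm_mul]
      calc ‖f a‖ * ‖∏ i ∈ s, f i - ∏ i ∈ s, g i‖
          ≤ 1 * ε := by
            refine mul_le_mul (hf a (mem_cons_self _ _)) ?_ (norm_nonneg _) zero_le_one
            exact ih (fun i hi => hf i (mem_cons_of_mem hi))
              (fun i hi => hg i (mem_cons_of_mem hi)) (fun i hi => h i (mem_cons_of_mem hi))
        _ = ε := one_mul ε
    · rw [norm_mul]
      calc ‖f a - g a‖ * ‖∏ i ∈ s, g i‖ ≤ ε * 1 := by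
            refine mul_le_mul (h a (mem_cons_self _ _)) ?_ (norm_nonneg _) hε
            exact pnorm_prod_le_one _ _ fun i hi => hg i (mem_cons_of_mem hi)
        _ = ε := mul_one ε

lemma ascPochhammer_eval_prod_range {R : Type*} [CommSemiring R] (x : R) (n : ℕ) :
    (ascPochhammer R n).eval x = ∏ j ∈ Finset.range n, (x + j) := by
  induction n with
  | zero => simp
  | succ n ih =>
    rw [ascPochhammer_succ_right, Finset.prod_range_succ, ← ih]
    simp [Polynomial.eval_mul]

lemma pnorm_int_eq_one {n : ℤ} (h : ¬ (p:ℤ) ∣ n) : ‖(n : ℚ_[p])‖ = 1 :=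
  le_antisymm (Padic.norm_int_le_one n)
    (le_of_not_gt fun hlt => h ((Padic.norm_intCast_lt_one_iff (k := n)).1 hlt))

lemma pnorm_int_dvd_le {n : ℤ} (h : (p:ℤ) ∣ n) : ‖(n : ℚ_[p])‖ ≤ (p:ℝ)⁻¹ := by
  obtain ⟨c, rfl⟩ := h
  rw [Int.cast_mul, norm_mul, Int.cast_natCast, Padic.norm_p]
  calc (p:ℝ)⁻¹ * ‖(c : ℚ_[p])‖ ≤ (p:ℝ)⁻¹ * 1 := by
        refine mul_le_mul_of_nonneg_left (Padic.norm_int_le_one c) ?_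
        positivity
    _ = (p:ℝ)⁻¹ := mul_one _

lemma pnorm_poch_div_factorial_le (θ : ℚ_[p]) (hθ : ‖θ‖ ≤ 1) (k : ℕ) :
    ‖(∏ j ∈ range k, (θ + j)) / (k.factorial : ℚ_[p])‖ ≤ 1 := by
  have hk0 : ((k.factorial : ℚ_[p])) ≠ 0 := by
    exact_mod_cast Nat.cast_ne_zero.2 (Nat.factorial_pos k).ne'
  have hknorm : 0 < ‖(k.factorial : ℚ_[p])‖ := norm_pos_iff.2 hk0
  have hp1 : (p:ℝ)⁻¹ < 1 := by
    rw [inv_lt_one_iff₀]; right; exact_mod_cast hp.1.one_lt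
  obtain ⟨N, hN⟩ := exists_pow_lt_of_lt_one hknorm hp1
  set z : ℤ_[p] := ⟨θ, hθ⟩ with hz
  set n : ℕ := z.appr N with hn
  have hspec := PadicInt.appr_spec N z
  rw [Ideal.mem_span_singleton] at hspec
  obtain ⟨c, hc⟩ := hspec
  have happrox : ‖θ - (n : ℚ_[p])‖ ≤ (p:ℝ)⁻¹ ^ N := by
    have h1 : θ - (n : ℚ_[p]) = ((z - n : ℤ_[p]) : ℚ_[p]) := by rw [PadicInt.coe_sub, PadicInt.coe_natCast]
    rw [h1, PadicInt.padic_norm_e_of_padicInt, hc, norm_mul, norm_pow,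
      PadicInt.norm_p]
    calc (p:ℝ)⁻¹ ^ N * ‖c‖ ≤ (p:ℝ)⁻¹ ^ N * 1 :=
          mul_le_mul_of_nonneg_left (PadicInt.norm_le_one c) (by positivity)
      _ = (p:ℝ)⁻¹ ^ N := mul_one _
  have hint : (∏ j ∈ range k, ((n:ℚ_[p]) + j)) = ((n.ascFactorial k : ℕ) : ℚ_[p]) := by
    rw [← ascPochhammer_eval_prod_range, ← ascPochhammer_eval_cast,
      ascPochhammer_nat_eq_ascFactorial]
  have hint_norm : ‖(∏ j ∈ range k, ((n:ℚ_[p]) + j)) / (k.factorial : ℚ_[p])‖ ≤ 1 := by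
    rw [hint, ← Nat.cast_div_charZero (Nat.factorial_dvd_ascFactorial n k)]
    exact_mod_cast Padic.norm_int_le_one ((n.ascFactorial k / k.factorial : ℕ) : ℤ)
  have hdiff : ‖(∏ j ∈ range k, (θ + j)) / (k.factorial : ℚ_[p])
      - (∏ j ∈ range k, ((n:ℚ_[p]) + j)) / (k.factorial : ℚ_[p])‖ ≤ 1 := by
    rw [div_sub_div_same, norm_div]
    have hnum : ‖(∏ j ∈ range k, (θ + j)) - ∏ j ∈ range k, ((n:ℚ_[p]) + j)‖ ≤ (p:ℝ)⁻¹ ^ N := by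
      refine pnorm_prod_sub_prod_le _ _ _ (by positivity) ?_ ?_ ?_
      · intro j _
        refine le_trans (Padic.nonarchimedean _ _) (max_le hθ ?_)
        exact_mod_cast Padic.norm_int_le_one (j : ℤ)
      · intro j _
        have : ((n:ℚ_[p]) + j) = (((n + j : ℕ) : ℤ) : ℚ_[p]) := by push_cast; ring
        rw [this]; exact Padic.norm_int_le_one _
      · intro j _
        have : θ + j - ((n:ℚ_[p]) + j) = θ - n := by ring
        rw [this]; exact happrox
    calc ‖(∏ j ∈ range k, (θ + j)) - ∏ j ∈ range k, ((n:ℚ_[p]) + j)‖ / ‖(k.factorial : ℚ_[p])‖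
        ≤ (p:ℝ)⁻¹ ^ N / ‖(k.factorial : ℚ_[p])‖ := by
          gcongr
      _ ≤ 1 := by
          rw [div_le_one hknorm]; exact hN.le
  calc ‖(∏ j ∈ range k, (θ + j)) / (k.factorial : ℚ_[p])‖
      = ‖((∏ j ∈ range k, (θ + j)) / (k.factorial : ℚ_[p])
          - (∏ j ∈ range k, ((n:ℚ_[p]) + j)) / (k.factorial : ℚ_[p]))
          + (∏ j ∈ range k, ((n:ℚ_[p]) + j)) / (k.factorial : ℚ_[p])‖ := by congr 1; ring
    _ ≤ 1 := le_trans (Padic.nonarchimedean _ _) (max_le hdiff hint_norm)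

lemma prod_range_mul_eq {M : Type*} [CommMonoid M] (f : ℕ → M) (m b : ℕ) :
    ∏ j ∈ range (m * b), f j = ∏ t ∈ range b, ∏ q ∈ range m, f (m * t + q) := by
  induction b with
  | zero => simp
  | succ b ih =>
    rw [Nat.mul_succ, Finset.prod_range_add, ih, Finset.prod_range_succ]

-- products over range p minus a point, in ZMod p

lemma zmod_prod_erase (s : ℕ) (hs : s < p) :
    ∏ q ∈ (range p).erase s, ((q : ZMod p) - (s : ZMod p))
      = ∏ x ∈ Finset.univ.erase (0 : ZMod p), x := by
  have hinj : ∀ q < p, ∀ q' < p, ((q : ZMod p) = q') → q = q' := by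
    intro q hq q' hq' h
    have := congrArg ZMod.val h
    rwa [ZMod.val_cast_of_lt hq, ZMod.val_cast_of_lt hq'] at this
  refine Finset.prod_bij (fun q _ => (q : ZMod p) - s) ?_ ?_ ?_ ?_
  · intro q hq
    rw [Finset.mem_erase] at hq ⊢
    refine ⟨?_, Finset.mem_univ _⟩
    intro h0
    rw [sub_eq_zero] at h0
    exact hq.1 (hinj q (Finset.mem_range.1 hq.2) s hs h0)
  · intro q hq q' hq' h
    rw [sub_left_inj] at h
    exact hinj q (Finset.mem_range.1 (Finset.mem_of_mem_erase hq)) q'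
      (Finset.mem_range.1 (Finset.mem_of_mem_erase hq')) h
  · intro x hx
    rw [Finset.mem_erase] at hx
    refine ⟨(x + s).val, ?_, ?_⟩
    · rw [Finset.mem_erase]
      constructor
      · intro h
        apply hx.1
        have : (((x + s).val : ℕ) : ZMod p) = ((s : ℕ) : ZMod p) := by rw [h]
        rw [ZMod.natCast_val, ZMod.cast_id] at this
        linear_combination this
      · exact Finset.mem_range.2 (ZMod.val_lt _)
    · show ((((x + s).val : ℕ) : ZMod p) - (s : ZMod p)) = x
      rw [ZMod.natCast_val, ZMod.cast_id]; ring
  · intros; rfl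

lemma int_prod_erase_congr (s : ℕ) (hs : s < p) :
    (p : ℤ) ∣ (∏ q ∈ (range p).erase s, ((q : ℤ) - (s : ℤ)))
      - ∏ q ∈ (range p).erase 0, (q : ℤ) := by
  have h0 : (0:ℕ) < p := hp.1.pos
  rw [← ZMod.intCast_zmod_eq_zero_iff_dvd]
  push_cast
  rw [sub_eq_zero]
  calc ∏ q ∈ (range p).erase s, ((q : ZMod p) - (s : ZMod p))
      = ∏ x ∈ Finset.univ.erase (0 : ZMod p), x := zmod_prod_erase s hs
    _ = ∏ q ∈ (range p).erase 0, ((q : ZMod p) - ((0:ℕ) : ZMod p)) :=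
        (zmod_prod_erase 0 h0).symm
    _ = ∏ q ∈ (range p).erase 0, (q : ZMod p) := by
        apply Finset.prod_congr rfl
        intros; push_cast; ring

lemma pnorm_nat_le_one (n : ℕ) : ‖(n : ℚ_[p])‖ ≤ 1 := by
  have := Padic.norm_int_le_one (p := p) (n : ℤ)
  simpa using this

lemma pnorm_nat_eq_one {n : ℕ} (h : ¬ p ∣ n) : ‖(n : ℚ_[p])‖ = 1 := by
  have h' : ¬ (p:ℤ) ∣ (n:ℤ) := by exact_mod_cast h
  have := le_antisymm (Padic.norm_int_le_one (p := p) (n : ℤ))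
    (le_of_not_gt fun hlt => h' (Padic.norm_intCast_lt_one_iff.1 hlt))
  simpa using this

lemma pnorm_theta_add_nat {θ : ℚ_[p]} (hθ : ‖θ‖ ≤ 1) (n : ℕ) : ‖θ + (n:ℚ_[p])‖ ≤ 1 :=
  le_trans (Padic.nonarchimedean _ _) (max_le hθ (pnorm_nat_le_one n))

lemma ascFactorial_eq_prod_range_add (x n : ℕ) :
    x.ascFactorial n = ∏ j ∈ range n, (x + j) := by
  induction n with
  | zero => simp
  | succ n ih => rw [Nat.ascFactorial_succ, prod_range_succ, ih, mul_comm]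

lemma factorial_add_eq (a n : ℕ) :
    (a + n).factorial = a.factorial * ∏ j ∈ range n, (a + 1 + j) := by
  rw [← ascFactorial_eq_prod_range_add, Nat.factorial_mul_ascFactorial]

lemma dwork_step (θ θ' : ℚ_[p]) (hθ : ‖θ‖ ≤ 1) (hθ' : ‖θ'‖ ≤ 1)
    (a r : ℕ) (ha : a < p) (hr : r < p)
    (hrel : θ + (r:ℚ_[p]) = (p:ℚ_[p]) * θ') (b : ℕ) :
    ‖(∏ j ∈ range (a + p*b), (θ + j)) / ((a + p*b).factorial : ℚ_[p])
      - ((∏ j ∈ range a, (θ + j)) / (a.factorial : ℚ_[p]))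
        * ((∏ t ∈ range b, (θ' + t)) / (b.factorial : ℚ_[p]))‖ ≤ (p:ℝ)⁻¹ := by
  have hppos : 0 < p := hp.1.pos
  set ε : ℝ := (p:ℝ)⁻¹ with hεdef
  have hε : 0 ≤ ε := by positivity
  have hε1 : ε ≤ 1 := by
    rw [hεdef]
    exact inv_le_one_of_one_le₀ (by exact_mod_cast hppos)
  -- digit/carry data
  obtain ⟨t0, s0, ht0, has0, hs0⟩ : ∃ t0 s0, t0 ≤ 1 ∧ a + s0 = r + p * t0 ∧ s0 < p := by
    rcases lt_or_ge r a with h | h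
    · exact ⟨1, r + p - a, le_refl 1, by omega, by omega⟩
    · exact ⟨0, r - a, by omega, by omega, by omega⟩
  set q1 : ℕ := p - 1 - a with hq1def
  have hq1 : q1 < p := by omega
  have haq1 : a + 1 + q1 = p := by omega
  -- the main quantities
  set Pa : ℚ_[p] := ∏ j ∈ range a, (θ + j) with hPa
  set Q : ℚ_[p] := ∏ t ∈ range b, (θ' + ((t0:ℚ_[p]) + t)) with hQ
  set W : ℕ → ℚ_[p] := fun t => ∏ q ∈ (range p).erase s0, (θ + (a:ℚ_[p]) + ((p*t + q : ℕ) : ℚ_[p])) with hW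
  set V : ℚ_[p] := ∏ t ∈ range b, W t with hV
  set Uf : ℕ → ℚ_[p] := fun t => ∏ q ∈ (range p).erase q1, ((a + 1 + (p*t + q) : ℕ) : ℚ_[p]) with hUf
  set U : ℚ_[p] := ∏ t ∈ range b, Uf t with hU
  set κ : ℚ_[p] := ((∏ q ∈ (range p).erase 0, (q:ℤ) : ℤ) : ℚ_[p]) with hκ
  have hs0mem : s0 ∈ range p := mem_range.2 hs0
  have hq1mem : q1 ∈ range p := mem_range.2 hq1
  -- numerator factorization
  have hN : ∏ j ∈ range (p*b), (θ + ((a + j : ℕ) : ℚ_[p]))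
      = (p:ℚ_[p])^b * Q * V := by
    rw [prod_range_mul_eq]
    have win : ∀ t, ∏ q ∈ range p, (θ + ((a + (p*t + q) : ℕ) : ℚ_[p]))
        = ((p:ℚ_[p]) * (θ' + ((t0:ℚ_[p]) + t))) * W t := by
      intro t
      rw [← Finset.mul_prod_erase _ _ hs0mem]
      congr 1
      · have hnat : a + (p*t + s0) = r + p*(t0 + t) := by rw [Nat.mul_add]; omega
        have hc : ((a + (p*t + s0) : ℕ) : ℚ_[p]) = ((r + p*(t0+t) : ℕ) : ℚ_[p]) := by
          rw [hnat]
        push_cast at hc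
        push_cast
        linear_combination hc + hrel
      · apply prod_congr rfl
        intros x _
        push_cast
        ring
    rw [Finset.prod_congr rfl (fun t _ => win t), Finset.prod_mul_distrib,
      Finset.prod_mul_distrib, Finset.prod_const, card_range, hQ, hV]
  -- denominator factorization
  have hM : (((a + p*b).factorial : ℕ) : ℚ_[p])
      = (a.factorial : ℚ_[p]) * ((p:ℚ_[p])^b * (b.factorial : ℚ_[p]) * U) := by
    rw [factorial_add_eq a (p*b), Nat.cast_mul]
    congr 1
    rw [Nat.cast_prod, prod_range_mul_eq (fun j => ((a + 1 + j : ℕ) : ℚ_[p]))]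
    have win : ∀ t, ∏ q ∈ range p, ((a + 1 + (p*t + q) : ℕ) : ℚ_[p])
        = ((p:ℚ_[p]) * ((t+1 : ℕ) : ℚ_[p])) * Uf t := by
      intro t
      rw [← Finset.mul_prod_erase _ _ hq1mem]
      congr 1
      have hnat : a + 1 + (p*t + q1) = p * (t+1) := by rw [Nat.mul_add, Nat.mul_one]; omega
      rw [hnat]
      push_cast
      ring
    rw [Finset.prod_congr rfl (fun t _ => win t), Finset.prod_mul_distrib,
      Finset.prod_mul_distrib, Finset.prod_const, card_range, hU]
    have : ∏ t ∈ range b, ((t+1 : ℕ) : ℚ_[p]) = (b.factorial : ℚ_[p]) := by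
      rw [← Nat.cast_prod]
      congr 1
      exact Finset.prod_range_add_one_eq_factorial b
    rw [this]
  -- window congruences
  set κs : ℕ → ℚ_[p] := fun s => ((∏ q ∈ (range p).erase s, ((q:ℤ) - (s:ℤ)) : ℤ) : ℚ_[p]) with hκs
  have hκs_prod : ∀ s : ℕ, κs s = ∏ q ∈ (range p).erase s, ((q:ℚ_[p]) - (s:ℚ_[p])) := by
    intro s
    rw [hκs]
    push_cast
    rfl
  have hκnorm : ‖κ‖ ≤ 1 := Padic.norm_int_le_one _
  have hκs_close : ∀ s < p, ‖κs s - κ‖ ≤ ε := by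
    intro s hs
    have : κs s - κ = (((∏ q ∈ (range p).erase s, ((q:ℤ) - (s:ℤ))
        - ∏ q ∈ (range p).erase 0, (q:ℤ) : ℤ)) : ℚ_[p]) := by
      rw [hκs, hκ]; push_cast; ring
    rw [this]
    exact pnorm_int_dvd_le (int_prod_erase_congr s hs)
  -- V-windows
  have hWfac_norm : ∀ t, ∀ q ∈ (range p).erase s0, ‖θ + (a:ℚ_[p]) + ((p*t + q : ℕ) : ℚ_[p])‖ ≤ 1 := by
    intro t q _
    have : θ + (a:ℚ_[p]) + ((p*t + q : ℕ) : ℚ_[p]) = θ + ((a + (p*t+q) : ℕ) : ℚ_[p]) := by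
      push_cast; ring
    rw [this]
    exact pnorm_theta_add_nat hθ _
  have hW_norm : ∀ t, ‖W t‖ ≤ 1 := fun t => pnorm_prod_le_one _ _ (hWfac_norm t)
  have hW_close : ∀ t, ‖W t - κ‖ ≤ ε := by
    intro t
    have h1 : ‖W t - κs s0‖ ≤ ε := by
      rw [hκs_prod s0, hW]
      refine pnorm_prod_sub_prod_le _ _ _ hε (hWfac_norm t) ?_ ?_
      · intro q _
        have : ((q:ℚ_[p]) - (s0:ℚ_[p])) = (((q:ℤ) - (s0:ℤ) : ℤ) : ℚ_[p]) := by push_cast; ring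
        rw [this]
        exact Padic.norm_int_le_one _
      · intro q _
        have hnat : a + (p*t) + s0 = r + p*(t0 + t) := by rw [Nat.mul_add]; omega
        have hc : ((a + (p*t) + s0 : ℕ) : ℚ_[p]) = ((r + p*(t0+t) : ℕ) : ℚ_[p]) := by rw [hnat]
        push_cast at hc
        have heq : θ + (a:ℚ_[p]) + ((p*t + q : ℕ) : ℚ_[p]) - ((q:ℚ_[p]) - (s0:ℚ_[p]))
            = (p:ℚ_[p]) * (θ' + ((t0:ℚ_[p]) + t)) := by
          push_cast
          linear_combination hc + hrel
        rw [heq, norm_mul, Padic.norm_p]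
        calc ε * ‖θ' + ((t0:ℚ_[p]) + t)‖ ≤ ε * 1 := by
              refine mul_le_mul_of_nonneg_left ?_ hε
              have : θ' + ((t0:ℚ_[p]) + t) = θ' + ((t0 + t : ℕ) : ℚ_[p]) := by push_cast; ring
              rw [this]
              exact pnorm_theta_add_nat hθ' _
          _ = ε := mul_one ε
    have h2 : W t - κ = (W t - κs s0) + (κs s0 - κ) := by ring
    rw [h2]
    exact le_trans (Padic.nonarchimedean _ _) (max_le h1 (hκs_close s0 hs0))
  have hV_close : ‖V - κ ^ b‖ ≤ ε := by
    have : κ ^ b = ∏ _t ∈ range b, κ := by rw [prod_const, card_range]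
    rw [hV, this]
    exact pnorm_prod_sub_prod_le _ _ _ hε (fun t _ => hW_norm t) (fun t _ => hκnorm)
      (fun t _ => hW_close t)
  -- U-windows
  have hUfac_unit : ∀ t, ∀ q ∈ (range p).erase q1, ‖((a + 1 + (p*t + q) : ℕ) : ℚ_[p])‖ = 1 := by
    intro t q hq
    rw [mem_erase, mem_range] at hq
    refine pnorm_nat_eq_one ?_
    intro hdvd
    have h1 : p ∣ (a + 1 + q) := by
      have h2 : a + 1 + (p*t + q) = (a+1+q) + p*t := by ring
      rw [h2] at hdvd
      exact (Nat.dvd_add_right ⟨t, rfl⟩).mp (by rwa [Nat.add_comm (a+1+q) (p*t)] at hdvd)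
    obtain ⟨c, hc⟩ := h1
    have hc2 : c < 2 := by
      by_contra hcc
      push_neg at hcc
      have : p * 2 ≤ p * c := Nat.mul_le_mul_left p hcc
      omega
    interval_cases c <;> omega
  have hUf_norm : ∀ t, ‖Uf t‖ = 1 := by
    intro t
    rw [hUf, norm_prod]
    exact Finset.prod_eq_one (fun q hq => hUfac_unit t q hq)
  have hU_norm : ‖U‖ = 1 := by
    rw [hU, norm_prod]
    exact Finset.prod_eq_one (fun t _ => hUf_norm t)
  have hU_ne : U ≠ 0 := by
    intro h0
    rw [h0, norm_zero] at hU_norm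
    exact one_ne_zero hU_norm.symm
  have hU_close : ∀ t, ‖Uf t - κ‖ ≤ ε := by
    intro t
    have h1 : ‖Uf t - κs q1‖ ≤ ε := by
      rw [hκs_prod q1, hUf]
      refine pnorm_prod_sub_prod_le _ _ _ hε
        (fun q hq => le_of_eq (hUfac_unit t q hq)) ?_ ?_
      · intro q _
        have : ((q:ℚ_[p]) - (q1:ℚ_[p])) = (((q:ℤ) - (q1:ℤ) : ℤ) : ℚ_[p]) := by push_cast; ring
        rw [this]
        exact Padic.norm_int_le_one _
      · intro q _
        have hnat : a + 1 + (p*t) + q1 = p * (t+1) := by rw [Nat.mul_add, Nat.mul_one]; omega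
        have heq : ((a + 1 + (p*t + q) : ℕ) : ℚ_[p]) - ((q:ℚ_[p]) - (q1:ℚ_[p]))
            = (((p * (t+1) : ℕ) : ℤ) : ℚ_[p]) := by
          rw [← hnat]
          push_cast
          ring
        rw [heq]
        exact pnorm_int_dvd_le (by exact_mod_cast Dvd.intro (t+1) rfl)
    have h2 : Uf t - κ = (Uf t - κs q1) + (κs q1 - κ) := by ring
    rw [h2]
    exact le_trans (Padic.nonarchimedean _ _) (max_le h1 (hκs_close q1 hq1))
  have hUV_close : ‖V - U‖ ≤ ε := by
    have hUc : ‖U - κ ^ b‖ ≤ ε := by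
      have : κ ^ b = ∏ _t ∈ range b, κ := by rw [prod_const, card_range]
      rw [hU, this]
      exact pnorm_prod_sub_prod_le _ _ _ hε (fun t _ => le_of_eq (hUf_norm t))
        (fun t _ => hκnorm) (fun t _ => hU_close t)
    have : V - U = (V - κ ^ b) - (U - κ ^ b) := by ring
    rw [this, sub_eq_add_neg]
    refine le_trans (Padic.nonarchimedean _ _) (max_le hV_close ?_)
    rw [norm_neg]
    exact hUc
  -- assemble
  set X : ℚ_[p] := Pa / (a.factorial : ℚ_[p]) with hX
  set Y : ℚ_[p] := Q / (b.factorial : ℚ_[p]) with hYdef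
  set Z : ℚ_[p] := (∏ t ∈ range b, (θ' + t)) / (b.factorial : ℚ_[p]) with hZdef
  have hane : ((a.factorial : ℚ_[p])) ≠ 0 := by
    exact_mod_cast Nat.cast_ne_zero.2 (Nat.factorial_pos a).ne'
  have hbne : ((b.factorial : ℚ_[p])) ≠ 0 := by
    exact_mod_cast Nat.cast_ne_zero.2 (Nat.factorial_pos b).ne'
  have hpne : ((p:ℚ_[p])) ≠ 0 := by exact_mod_cast hppos.ne'
  have hfact : (∏ j ∈ range (a + p*b), (θ + j)) / ((a + p*b).factorial : ℚ_[p])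
      = X * Y * (V / U) := by
    rw [Finset.prod_range_add (fun j => θ + (j:ℚ_[p])) a (p*b), hN, hM, hX, hYdef, ← hPa]
    have hden1 : (a.factorial : ℚ_[p]) * ((p:ℚ_[p])^b * (b.factorial:ℚ_[p]) * U) ≠ 0 :=
      mul_ne_zero hane (mul_ne_zero (mul_ne_zero (pow_ne_zero _ hpne) hbne) hU_ne)
    have hden2 : (a.factorial : ℚ_[p]) * (b.factorial:ℚ_[p]) * U ≠ 0 :=
      mul_ne_zero (mul_ne_zero hane hbne) hU_ne
    rw [div_mul_div_comm, div_mul_div_comm, div_eq_div_iff hden1 hden2]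
    ring
  have hXnorm : ‖X‖ ≤ 1 := pnorm_poch_div_factorial_le θ hθ a
  have hYnorm : ‖Y‖ ≤ 1 := by
    have hQ' : Q = ∏ t ∈ range b, ((θ' + (t0:ℚ_[p])) + t) := by
      apply prod_congr rfl; intros; ring
    rw [hYdef, hQ']
    exact pnorm_poch_div_factorial_le _ (pnorm_theta_add_nat hθ' t0) b
  have hZnorm : ‖Z‖ ≤ 1 := pnorm_poch_div_factorial_le θ' hθ' b
  have step1 : ‖(∏ j ∈ range (a + p*b), (θ + j)) / ((a + p*b).factorial : ℚ_[p]) - X * Y‖ ≤ ε := by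
    rw [hfact]
    have heq : X * Y * (V / U) - X * Y = X * Y * ((V - U)/U) := by
      field_simp
    have h3 : ‖(V - U)/U‖ ≤ ε := by
      rw [norm_div, hU_norm, div_one]
      exact hUV_close
    rw [heq, norm_mul, norm_mul]
    calc ‖X‖ * ‖Y‖ * ‖(V - U)/U‖ ≤ 1 * 1 * ε := by
          refine mul_le_mul (mul_le_mul hXnorm hYnorm (norm_nonneg _) zero_le_one)
            h3 (norm_nonneg _) (by norm_num)
      _ = ε := by ring
  rcases Nat.le_one_iff_eq_zero_or_eq_one.mp ht0 with h0 | h1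
  · -- no carry : Y = Z
    have hYZ : Y = Z := by
      rw [hYdef, hZdef]
      congr 1
      refine prod_congr rfl (fun t _ => ?_)
      rw [h0]
      push_cast
      ring
    rw [← hYZ]
    exact step1
  · -- carry case
    have hra : r < a := by rw [h1, Nat.mul_one] at has0; omega
    have hXsmall : ‖X‖ ≤ ε := by
      have hamem : r ∈ range a := mem_range.2 hra
      have hPa_fac : Pa = (θ + (r:ℚ_[p])) * ∏ j ∈ (range a).erase r, (θ + (j:ℚ_[p])) :=
        (Finset.mul_prod_erase _ _ hamem).symm
      have hPa_norm : ‖Pa‖ ≤ ε := by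
        rw [hPa_fac, norm_mul, hrel, norm_mul, Padic.norm_p]
        calc ε * ‖θ'‖ * ‖∏ j ∈ (range a).erase r, (θ + (j:ℚ_[p]))‖ ≤ ε * 1 * 1 := by
              refine mul_le_mul (mul_le_mul le_rfl hθ' (norm_nonneg _) hε) ?_
                (norm_nonneg _) (by positivity)
              exact pnorm_prod_le_one _ _ (fun j _ => pnorm_theta_add_nat hθ j)
          _ = ε := by ring
      have hafac : ‖((a.factorial : ℕ) : ℚ_[p])‖ = 1 := by
        refine pnorm_nat_eq_one ?_
        intro hdvd
        have := (Nat.Prime.dvd_factorial hp.1).mp hdvd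
        omega
      rw [hX, norm_div, hafac, div_one]
      exact hPa_norm
    have hfinal : (∏ j ∈ range (a + p*b), (θ + j)) / ((a + p*b).factorial : ℚ_[p]) - X * Z
        = ((∏ j ∈ range (a + p*b), (θ + j)) / ((a + p*b).factorial : ℚ_[p]) - X * Y)
          + X * (Y - Z) := by ring
    rw [hfinal]
    refine le_trans (Padic.nonarchimedean _ _) (max_le step1 ?_)
    rw [norm_mul]
    have hYZ : ‖Y - Z‖ ≤ 1 := by
      rw [sub_eq_add_neg]
      refine le_trans (Padic.nonarchimedean _ _) (max_le hYnorm ?_)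
      rw [norm_neg]
      exact hZnorm
    calc ‖X‖ * ‖Y - Z‖ ≤ ε * 1 := mul_le_mul hXsmall hYZ (norm_nonneg _) hε
      _ = ε := mul_one ε

lemma sum_range_mul_eq {M : Type*} [AddCommMonoid M] (f : ℕ → M) (m b : ℕ) :
    ∑ j ∈ range (m * b), f j = ∑ t ∈ range b, ∑ q ∈ range m, f (m * t + q) := by
  induction b with
  | zero => simp
  | succ b ih =>
    rw [Nat.mul_succ, Finset.sum_range_add, ih, Finset.sum_range_succ]

/-- for Galois-stable `α` in `(0,1)`, an odd prime `p ∤ m`, and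
`τ ∈ {1, -1}`, if `F_1(α,1^d|τ)` is a `p`-adic unit then so is `F_s(α,1^d|τ)`
for every `s ≥ 1`. -/
theorem truncations_are_units
    (d : ℕ) (α : Fin d → ℚ)
    (hα : ∀ i, 0 < α i ∧ α i < 1)
    (m : ℕ) (hm : m = Finset.univ.lcm fun i => (α i).den)
    (hgal : ∀ c : ℤ, IsCoprime c (m : ℤ) →
      Multiset.map (fun i => Int.fract ((c : ℚ) * α i)) Finset.univ.val
        = Multiset.map α Finset.univ.val)
    (p : ℕ) [Fact p.Prime] (hodd : Odd p) (hpm : ¬ p ∣ m)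
    (τ : ℚ_[p]) (hτ : τ = 1 ∨ τ = -1)
    (F : ℕ → ℚ_[p])
    (hF : ∀ s, F s = ∑ k ∈ Finset.range (p ^ s),
      (((∏ i, (ascPochhammer ℚ k).eval (α i)) / (k.factorial : ℚ) ^ d : ℚ) : ℚ_[p])
        * τ ^ k)
    (hunit : ‖F 1‖ = 1)
    (s : ℕ) (hs : 1 ≤ s) :
    ‖F s‖ = 1 := by
  have hppos : 0 < p := Fact.out (p := p.Prime) |>.pos
  have hp2 : 2 ≤ p := Fact.out (p := p.Prime) |>.two_le
  set ε : ℝ := (p:ℝ)⁻¹ with hεdef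
  have hε : 0 ≤ ε := by positivity
  have hε1 : ε < 1 := by
    rw [hεdef, inv_lt_one_iff₀]
    right
    exact_mod_cast by omega
  -- τ facts
  have hτnorm : ‖τ‖ = 1 := by rcases hτ with h | h <;> simp [h]
  have hτp : τ ^ p = τ := by
    rcases hτ with h | h
    · simp [h]
    · rw [h, Odd.neg_one_pow hodd]
  -- m and denominators
  have hm0 : m ≠ 0 := fun h => hpm (h ▸ dvd_zero p)
  have hden_dvd : ∀ i, ((α i).den : ℕ) ∣ m := by
    intro i
    rw [hm]
    exact Finset.dvd_lcm (mem_univ i)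
  have hden_p : ∀ i, ¬ p ∣ (α i).den := by
    intro i hdvd
    exact hpm (hdvd.trans (hden_dvd i))
  -- get the inverse of p mod m
  have hcop : IsCoprime (p:ℤ) (m:ℤ) := by
    rw [Int.isCoprime_iff_gcd_eq_one]
    exact_mod_cast (Nat.Prime.coprime_iff_not_dvd (Fact.out)).2 hpm
  obtain ⟨u, v, huv⟩ := hcop
  set c : ℤ := u with hcdef
  have hccop : IsCoprime c (m:ℤ) := ⟨p, v, by linarith⟩
  have hmdvd : (m:ℤ) ∣ c * p - 1 := ⟨-v, by linarith⟩
  -- Frobenius-translated parameters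
  set α' : Fin d → ℚ := fun i => Int.fract ((c:ℚ) * α i) with hα'def
  have hperm : Multiset.map α' Finset.univ.val = Multiset.map α Finset.univ.val :=
    hgal c hccop
  -- each α' i is one of the α j
  have hα'mem : ∀ i, ∃ j, α j = α' i := by
    intro i
    have h1 : α' i ∈ Multiset.map α' Finset.univ.val :=
      Multiset.mem_map_of_mem _ (Finset.mem_univ_val i)
    rw [hperm] at h1
    obtain ⟨j, _, hj⟩ := Multiset.mem_map.1 h1
    exact ⟨j, hj⟩
  -- the carry digits r i
  have hri : ∀ i, ∃ ri : ℕ, ri < p ∧ α i + (ri:ℚ) = p * α' i := by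
    intro i
    set q := α i with hq
    obtain ⟨e, he⟩ : ((q.den : ℤ)) ∣ (p * c - 1) := by
      have h1 : ((q.den:ℤ)) ∣ (m:ℤ) := Int.natCast_dvd_natCast.2 (hden_dvd i)
      have h2 : (m:ℤ) ∣ (p:ℤ)*c - 1 := by
        obtain ⟨w, hw⟩ := hmdvd
        exact ⟨w, by linarith⟩
      exact h1.trans h2
    have hkey : (((p:ℤ)*c - 1 : ℤ) : ℚ) * q = (e:ℚ) * (q.num:ℚ) := by
      rw [he]
      push_cast
      rw [mul_comm ((q.den:ℚ)) ((e:ℚ)), mul_assoc]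
      congr 1
      rw [mul_comm]
      exact_mod_cast Rat.mul_den_eq_num q
    set z : ℤ := e * q.num - p * ⌊(c:ℚ) * q⌋ with hzdef
    have hint : (p:ℚ) * α' i - q = (z : ℚ) := by
      have hfr : α' i = (c:ℚ) * q - ⌊(c:ℚ) * q⌋ := by
        rw [hα'def]
        simp only [Int.fract, hq]
      rw [hfr, hzdef]
      push_cast at hkey ⊢
      linear_combination hkey
    have hfr0 : (0:ℚ) ≤ α' i := Int.fract_nonneg _
    have hfr1 : α' i < 1 := Int.fract_lt_one _
    have hq0 : 0 < q := (hα i).1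
    have hq1 : q < 1 := (hα i).2
    have hppos' : (0:ℚ) < (p:ℚ) := by exact_mod_cast hppos
    have hz0 : 0 ≤ z := by
      have h1 : (-1:ℚ) < (z:ℚ) := by
        rw [← hint]
        nlinarith [mul_nonneg (le_of_lt hppos') hfr0]
      by_contra h
      push_neg at h
      have h2 : (z:ℚ) ≤ -1 := by
        have : z ≤ -1 := by omega
        exact_mod_cast this
      linarith
    have hzp : z < p := by
      have h1 : (z:ℚ) < (p:ℚ) := by
        rw [← hint]
        nlinarith [hfr1, hppos']
      exact_mod_cast h1
    refine ⟨z.toNat, by omega, ?_⟩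
    have h3 : ((z.toNat : ℕ) : ℚ) = (z : ℚ) := by exact_mod_cast Int.toNat_of_nonneg hz0
    rw [h3]
    linarith [hint]
  choose r hrlt hrrel using hri
  -- p-adic parameters
  set θ : Fin d → ℚ_[p] := fun i => ((α i : ℚ) : ℚ_[p]) with hθdef
  set θ' : Fin d → ℚ_[p] := fun i => ((α' i : ℚ) : ℚ_[p]) with hθ'def
  have hθnorm : ∀ i, ‖θ i‖ ≤ 1 := fun i => Padic.norm_rat_le_one (hden_p i)
  have hθ'norm : ∀ i, ‖θ' i‖ ≤ 1 := by
    intro i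
    obtain ⟨j, hj⟩ := hα'mem i
    rw [hθ'def]
    simp only
    rw [← hj]
    exact Padic.norm_rat_le_one (hden_p j)
  have hrel : ∀ i, θ i + ((r i : ℕ) : ℚ_[p]) = (p:ℚ_[p]) * θ' i := by
    intro i
    have := hrrel i
    rw [hθdef, hθ'def]
    simp only
    exact_mod_cast congrArg (fun x : ℚ => (x : ℚ_[p])) this
  -- the Pochhammer coefficients, as products of p-adic integers
  set A : ℕ → ℚ_[p] := fun k =>
    (((∏ i, (ascPochhammer ℚ k).eval (α i)) / (k.factorial : ℚ) ^ d : ℚ) : ℚ_[p]) with hAdef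
  have hAprod : ∀ k, A k
      = ∏ i, ((∏ j ∈ range k, (θ i + j)) / ((k.factorial : ℚ_[p]))) := by
    intro k
    rw [hAdef]
    simp only
    rw [Finset.prod_div_distrib, Finset.prod_const, Finset.card_univ, Fintype.card_fin]
    push_cast
    congr 1
    refine Finset.prod_congr rfl (fun i _ => ?_)
    rw [ascPochhammer_eval_prod_range]
    rw [hθdef]
    push_cast
    rfl
  have hAnorm : ∀ k, ‖A k‖ ≤ 1 := by
    intro k
    rw [hAprod]
    exact pnorm_prod_le_one _ _
      (fun i _ => pnorm_poch_div_factorial_le (θ i) (hθnorm i) k)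
  -- the multiset-invariance of the b-blocks
  have hblock : ∀ b : ℕ,
      ∏ i, ((∏ j ∈ range b, (θ' i + j)) / ((b.factorial : ℚ_[p])))
        = ∏ i, ((∏ j ∈ range b, (θ i + j)) / ((b.factorial : ℚ_[p]))) := by
    intro b
    set G : ℚ → ℚ_[p] := fun x => (∏ j ∈ range b, (((x:ℚ):ℚ_[p]) + j)) / ((b.factorial : ℚ_[p]))
      with hGdef
    have h1 : ∀ i, ((∏ j ∈ range b, (θ' i + j)) / ((b.factorial : ℚ_[p]))) = G (α' i) := by
      intro i; rw [hGdef, hθ'def]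
    have h2 : ∀ i, ((∏ j ∈ range b, (θ i + j)) / ((b.factorial : ℚ_[p]))) = G (α i) := by
      intro i; rw [hGdef, hθdef]
    calc ∏ i, ((∏ j ∈ range b, (θ' i + j)) / ((b.factorial : ℚ_[p])))
        = ∏ i, G (α' i) := Finset.prod_congr rfl (fun i _ => h1 i)
      _ = (Multiset.map (fun i => G (α' i)) Finset.univ.val).prod := by
          rw [Finset.prod_eq_multiset_prod]
      _ = ((Multiset.map α' Finset.univ.val).map G).prod := by rw [Multiset.map_map]; rfl
      _ = ((Multiset.map α Finset.univ.val).map G).prod := by rw [hperm]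
      _ = (Multiset.map (fun i => G (α i)) Finset.univ.val).prod := by rw [Multiset.map_map]; rfl
      _ = ∏ i, G (α i) := by rw [Finset.prod_eq_multiset_prod]
      _ = ∏ i, ((∏ j ∈ range b, (θ i + j)) / ((b.factorial : ℚ_[p]))) :=
          Finset.prod_congr rfl (fun i _ => (h2 i).symm)
  -- the coefficientwise Dwork congruence
  have hAcong : ∀ a b : ℕ, a < p → ‖A (a + p*b) - A a * A b‖ ≤ ε := by
    intro a b hab
    rw [hAprod, hAprod, hAprod, ← hblock b, ← Finset.prod_mul_distrib]
    refine pnorm_prod_sub_prod_le _ _ _ hε ?_ ?_ ?_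
    · intro i _
      exact pnorm_poch_div_factorial_le (θ i) (hθnorm i) _
    · intro i _
      rw [norm_mul]
      calc ‖(∏ j ∈ range a, (θ i + j)) / ((a.factorial : ℚ_[p]))‖
            * ‖(∏ j ∈ range b, (θ' i + j)) / ((b.factorial : ℚ_[p]))‖
          ≤ 1 * 1 := mul_le_mul (pnorm_poch_div_factorial_le (θ i) (hθnorm i) a)
              (pnorm_poch_div_factorial_le (θ' i) (hθ'norm i) b) (norm_nonneg _) zero_le_one
        _ = 1 := by norm_num
    · intro i _
      exact dwork_step (θ i) (θ' i) (hθnorm i) (hθ'norm i) a (r i) hab (hrlt i) (hrel i) b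
  -- the Dwork congruence for the truncated sums
  have hFcong : ∀ n : ℕ, ‖F (n+1) - F 1 * F n‖ ≤ ε := by
    intro n
    have hexp : F (n+1) = ∑ t ∈ range (p^n), ∑ q ∈ range p, A (p*t + q) * τ ^ (p*t + q) := by
      rw [hF (n+1), pow_succ, mul_comm (p^n) p, sum_range_mul_eq]
    have hprod : F 1 * F n = ∑ t ∈ range (p^n), ∑ q ∈ range p,
        (A t * τ ^ t) * (A q * τ ^ q) := by
      rw [mul_comm, hF 1, hF n, pow_one, Finset.sum_mul_sum]
    rw [hexp, hprod, ← Finset.sum_sub_distrib]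
    refine pnorm_sum_le _ _ hε (fun t _ => ?_)
    rw [← Finset.sum_sub_distrib]
    refine pnorm_sum_le _ _ hε (fun q hq => ?_)
    have hτeq : τ ^ (p*t + q) = τ ^ t * τ ^ q := by
      rw [pow_add, pow_mul, hτp]
    have heq : A (p*t + q) * τ ^ (p*t + q) - A t * τ ^ t * (A q * τ ^ q)
        = (A (q + p*t) - A q * A t) * (τ ^ t * τ ^ q) := by
      rw [hτeq, Nat.add_comm q (p*t)]
      ring
    rw [heq, norm_mul, norm_mul, norm_pow, norm_pow, hτnorm, one_pow, one_pow, mul_one, mul_one]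
    exact hAcong q t (Finset.mem_range.1 hq)
  -- the main induction
  clear hF hAdef
  induction s, hs using Nat.le_induction with
  | base => exact hunit
  | succ n hn ih =>
    have h1 : ‖F 1 * F n‖ = 1 := by rw [norm_mul, hunit, ih, one_mul]
    have h2 : ‖F (n+1) - F 1 * F n‖ < 1 := lt_of_le_of_lt (hFcong n) hε1
    have h3 : F (n+1) = (F (n+1) - F 1 * F n) + F 1 * F n := by ring
    rw [h3, Padic.add_eq_max_of_ne (by rw [h1]; exact ne_of_lt h2), h1,
      max_eq_right (le_of_lt (h1 ▸ h2))]
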